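/- Let G be a finite simple graph with n vertices and maximum degree at most Δ, where Δ ≥ 1. Then c(G) ≤ 1 + ((2^{Δ+1} − 1)/(Δ+1))·n; equivalently, (Δ+1)·(c(G) − 1) ≤ (2^{Δ+1} − 1)·n. -/

import Mathlib

/-- The number of cliques (sets of pairwise adjacent vertices, including the
empty clique) of a graph. -/
noncomputable def cliqueCount {V : Type*} (G : SimpleGraph V) : ℕ :=
  Nat.card {s : Finset V // G.IsClique (s : Set V)}

private lemma aux_nat_sum (d : ℕ) :
    ∑ k ∈ Finset.range (d + 1), (d + 1).choose (k + 1) = 2 ^ (d + 1) - 1 := by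
  have h := Nat.sum_range_choose (d + 1)
  have h2 := Finset.sum_range_succ' (fun k => (d + 1).choose k) (d + 1)
  simp only [Nat.choose_zero_right] at h2
  omega

private lemma aux_powerset_sum {α : Type*} (D : Finset α) :
    ∑ T ∈ D.powerset, (1 : ℝ) / (T.card + 1)
      = ((2 : ℝ) ^ (D.card + 1) - 1) / (D.card + 1) := by
  classical
  set d := D.card with hd
  rw [Finset.sum_powerset]
  have : ∀ j ∈ Finset.range (d + 1),
      ∑ T ∈ Finset.powersetCard j D, (1 : ℝ) / (T.card + 1)
        = ((d + 1).choose (j + 1) : ℝ) / (d + 1) := by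
    intro j hj
    have hcard : ∀ T ∈ Finset.powersetCard j D, (1 : ℝ) / (T.card + 1)
        = (1 : ℝ) / (j + 1) := by
      intro T hT
      rw [(Finset.mem_powersetCard.1 hT).2]
    rw [Finset.sum_congr rfl hcard, Finset.sum_const, Finset.card_powersetCard, ← hd]
    have hch := Nat.add_one_mul_choose_eq d j
    have : ((d : ℝ) + 1) * (d.choose j) = ((d + 1).choose (j + 1)) * (j + 1) := by
      exact_mod_cast hch
    have hj1 : ((j : ℝ) + 1) ≠ 0 := by positivity
    have hd1 : ((d : ℝ) + 1) ≠ 0 := by positivity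
    rw [nsmul_eq_mul]
    field_simp
    nlinarith [this]
  rw [Finset.sum_congr rfl this, ← Finset.sum_div]
  congr 1
  rw [← Nat.cast_sum]
  rw [aux_nat_sum d]
  have : (1 : ℕ) ≤ 2 ^ (d + 1) := Nat.one_le_two_pow
  push_cast [Nat.cast_sub this]
  ring

private lemma aux_mono {m n : ℕ} (h : m ≤ n) :
    ((2 : ℝ) ^ (m + 1) - 1) / (m + 1) ≤ ((2 : ℝ) ^ (n + 1) - 1) / (n + 1) := by
  induction n, h using Nat.le_induction with
  | base => exact le_rfl
  | succ n hmn ih =>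
      refine ih.trans ?_
      rw [div_le_div_iff₀ (by positivity) (by positivity)]
      have h1 : (1 : ℝ) ≤ 2 ^ (n + 1) := one_le_pow₀ (by norm_num)
      have hn : (0 : ℝ) ≤ n := Nat.cast_nonneg n
      push_cast
      nlinarith [pow_succ (2:ℝ) (n+1),
        mul_nonneg hn (by positivity : (0:ℝ) ≤ 2 ^ (n+1))]

theorem clique_count_bounded_degree_vertices {V : Type*} [Fintype V]
    (G : SimpleGraph V) [DecidableRel G.Adj] (Δ : ℕ) (hΔ : 1 ≤ Δ)
    (hdeg : ∀ v, G.degree v ≤ Δ) :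
    (cliqueCount G : ℝ) ≤ 1 +
      ((2 ^ (Δ + 1) - 1) / ((Δ : ℝ) + 1)) * Fintype.card V := by
  classical
  set F : Finset (Finset V) :=
    Finset.univ.filter (fun s => G.IsClique (s : Set V)) with hF
  have hcount : cliqueCount G = F.card := by
    rw [cliqueCount, Nat.card_eq_fintype_card, Fintype.card_subtype]
  have hemp : (∅ : Finset V) ∈ F := by
    simp [hF, SimpleGraph.isClique_empty]
  set F' := F.erase ∅ with hF'
  have hcard : F.card = F'.card + 1 := by
    rw [hF', Finset.card_erase_of_mem hemp]
    have : 1 ≤ F.card := Finset.card_pos.2 ⟨∅, hemp⟩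
    omega
  -- key bound on nonempty cliques
  have key : (F'.card : ℝ) ≤ ((2 ^ (Δ + 1) - 1) / ((Δ : ℝ) + 1)) * Fintype.card V := by
    have h1 : (F'.card : ℝ) = ∑ S ∈ F', ∑ v ∈ S, (1 : ℝ) / S.card := by
      rw [Finset.card_eq_sum_ones, Nat.cast_sum]
      refine Finset.sum_congr rfl fun S hS => ?_
      have hSne : S ≠ ∅ := Finset.ne_of_mem_erase hS
      have hSc : (0 : ℝ) < S.card := by
        exact_mod_cast Finset.card_pos.2 (Finset.nonempty_of_ne_empty hSne)
      rw [Finset.sum_const, nsmul_eq_mul]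
      field_simp
      simp
    have h2 : ∑ S ∈ F', ∑ v ∈ S, (1 : ℝ) / S.card
        = ∑ v : V, ∑ S ∈ F'.filter (fun S => v ∈ S), (1 : ℝ) / S.card :=
      Finset.sum_comm' fun S v => by
        simp only [Finset.mem_filter, Finset.mem_univ, and_true, true_and, and_comm]
    rw [h1, h2]
    have h3 : ∀ v : V, ∑ S ∈ F'.filter (fun S => v ∈ S), (1 : ℝ) / S.card
        ≤ ((2 : ℝ) ^ (Δ + 1) - 1) / ((Δ : ℝ) + 1) := by
      intro v
      set A := F'.filter (fun S => v ∈ S) with hA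
      have himg : ∑ S ∈ A, (1 : ℝ) / S.card
          = ∑ T ∈ A.image (fun S => S.erase v), (1 : ℝ) / (T.card + 1) := by
        rw [Finset.sum_image]
        · refine Finset.sum_congr rfl fun S hS => ?_
          have hv : v ∈ S := (Finset.mem_filter.1 hS).2
          have : (S.erase v).card + 1 = S.card := by
            rw [Finset.card_erase_of_mem hv]
            have : 1 ≤ S.card := Finset.card_pos.2 ⟨v, hv⟩
            omega
          rw [← this]
          push_cast
          ring_nf
        · intro S hS S' hS' h
          have hv : v ∈ S := (Finset.mem_filter.1 hS).2
          have hv' : v ∈ S' := (Finset.mem_filter.1 hS').2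
          rw [← Finset.insert_erase hv, ← Finset.insert_erase hv', (show S.erase v = S'.erase v from h)]
      have hsub : A.image (fun S => S.erase v) ⊆ (G.neighborFinset v).powerset := by
        intro T hT
        rcases Finset.mem_image.1 hT with ⟨S, hS, rfl⟩
        rw [Finset.mem_powerset]
        intro u hu
        have hv : v ∈ S := (Finset.mem_filter.1 hS).2
        have hclique : G.IsClique (S : Set V) := by
          have := Finset.mem_erase.1 (Finset.mem_filter.1 hS).1
          simpa [hF] using this.2
        have huS : u ∈ S := Finset.mem_of_mem_erase hu
        have hne : u ≠ v := Finset.ne_of_mem_erase hu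
        rw [SimpleGraph.mem_neighborFinset]
        exact hclique hv huS (Ne.symm hne)
      calc ∑ S ∈ A, (1 : ℝ) / S.card
          = ∑ T ∈ A.image (fun S => S.erase v), (1 : ℝ) / (T.card + 1) := himg
        _ ≤ ∑ T ∈ (G.neighborFinset v).powerset, (1 : ℝ) / (T.card + 1) :=
            Finset.sum_le_sum_of_subset_of_nonneg hsub (fun T _ _ => by positivity)
        _ = ((2 : ℝ) ^ ((G.neighborFinset v).card + 1) - 1)
              / ((G.neighborFinset v).card + 1) := aux_powerset_sum _
        _ ≤ ((2 : ℝ) ^ (Δ + 1) - 1) / ((Δ : ℝ) + 1) := by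
            have hd : (G.neighborFinset v).card ≤ Δ := by
              rw [SimpleGraph.card_neighborFinset_eq_degree]; exact hdeg v
            exact aux_mono hd
    calc ∑ v : V, ∑ S ∈ F'.filter (fun S => v ∈ S), (1 : ℝ) / S.card
        ≤ ∑ _v : V, ((2 : ℝ) ^ (Δ + 1) - 1) / ((Δ : ℝ) + 1) :=
          Finset.sum_le_sum fun v _ => h3 v
      _ = ((2 ^ (Δ + 1) - 1) / ((Δ : ℝ) + 1)) * Fintype.card V := by
          rw [Finset.sum_const, nsmul_eq_mul, Finset.card_univ]; ring
  rw [hcount, hcard]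
  push_cast
  linarith
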